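/- arXiv:2205.15498 — 3 statements merged into one kernel-verified Lean document; each statement's English description precedes it below -/
import Mathlib

section
/- Let p be a prime with p ≡ 5 (mod 24), let ω be a primitive element of 𝔽_p, set C_i = ω^i⟨ω⁴⟩ for i = 0,1,2,3 (subscripts read modulo 4), and let ε ∈ {1,3} be the index with −2 ∈ C_ε. Then the Hadamard matrix H_{NV^(1)(p)} is equivalent to H(C₂ ∪ C_{2+ε}, C₀ ∪ C_{ε+2}), and the Hadamard matrix H_{NV^(−1)(p)} is equivalent to H(C₀ ∪ C_ε, C₂ ∪ C_ε). -/
open Matrix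

/-- Entry `χ(c)` where `b - a = c²` is a nonzero square (value `1` if `c` can be chosen a
square, i.e. `b - a` is a nonzero fourth power, `-1` if `b - a` is a nonzero square that is
not a fourth power, and `0` otherwise). -/
def RX (p : ℕ) [NeZero p] : Matrix (ZMod p) (ZMod p) ℤ :=
  Matrix.of fun a b =>
    if ∃ c : ZMod p, c ≠ 0 ∧ c ^ 2 = b - a ∧ ∃ d : ZMod p, d ^ 2 = c then 1
    else if ∃ c : ZMod p, c ≠ 0 ∧ c ^ 2 = b - a then -1
    else 0

def RY (p : ℕ) [NeZero p] : Matrix (ZMod p) (ZMod p) ℤ :=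
  Matrix.of fun a b =>
    if ∃ c : ZMod p, c ≠ 0 ∧ c ^ 2 = 2 * (b - a) ∧ ∃ d : ZMod p, d ^ 2 = c then 1
    else if ∃ c : ZMod p, c ≠ 0 ∧ c ^ 2 = 2 * (b - a) then -1
    else 0

def Xmat (p : ℕ) [NeZero p] : Matrix (Option (ZMod p)) (Option (ZMod p)) ℤ :=
  Matrix.of fun i j =>
    match i, j with
    | none, none => 0
    | none, some _ => 1
    | some _, none => -1
    | some a, some b => RX p a b

def Ymat (p : ℕ) [NeZero p] : Matrix (Option (ZMod p)) (Option (ZMod p)) ℤ :=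
  Matrix.of fun i j =>
    match i, j with
    | none, _ => 0
    | some _, none => 0
    | some a, some b => RY p a b

/-- Index set of the length `2(p+1)` code. -/
abbrev NVIdx (p : ℕ) := Option (ZMod p) ⊕ Option (ZMod p)

def Bw (p : ℕ) [NeZero p] : Matrix (NVIdx p) (NVIdx p) ℤ :=
  Matrix.fromBlocks (Xmat p) (Ymat p) (-(Ymat p)ᵀ) (Xmat p)ᵀ

/-- Generator matrix `a I + B_w` (over `ℤ`). -/
def NVgen (p : ℕ) [NeZero p] (a : ℤ) : Matrix (NVIdx p) (NVIdx p) ℤ :=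
  a • (1 : Matrix (NVIdx p) (NVIdx p) ℤ) + Bw p

/-- The ternary code `NV^(a)(p)`: the row space over `𝔽₃` of `a I + B_w` reduced mod 3. -/
def NVcode (p : ℕ) [NeZero p] (a : ℤ) : Submodule (ZMod 3) (NVIdx p → ZMod 3) :=
  Submodule.span (ZMod 3) (Set.range fun i => ((NVgen p a).map (Int.cast : ℤ → ZMod 3)) i)

/-- The matrix `H_{NV^(a)(p)}`. -/
def Hnv (p : ℕ) [NeZero p] (a : ℤ) : Matrix (NVIdx p) (NVIdx p) ℤ :=
  Matrix.fromBlocks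
    (Xmat p - (Ymat p)ᵀ + a • 1) (Ymat p + (Xmat p)ᵀ + a • 1)
    (-(Ymat p)ᵀ - Xmat p - a • 1) ((Xmat p)ᵀ - Ymat p + a • 1)

/-- Weight of a ternary vector: the number of nonzero coordinates. -/
def wt {ι : Type*} [Fintype ι] (v : ι → ZMod 3) : ℕ :=
  (Finset.univ.filter fun i => v i ≠ 0).card

/-- `H` is a Hadamard matrix of order `n`. -/
def IsHadamard {ι : Type*} [Fintype ι] [DecidableEq ι] (n : ℕ) (H : Matrix ι ι ℤ) : Prop :=
  (∀ i j, H i j = 1 ∨ H i j = -1) ∧ H * Hᵀ = (n : ℤ) • (1 : Matrix ι ι ℤ)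
/-- The type-1 matrix of a subset `D ⊆ G` (for a fixed ordering of `G`, here the indexing of
rows and columns by `G` itself): entry `(i, j)` is `1` if `j - i ∈ D` and `-1` otherwise. -/
def type1 {G : Type*} [AddCommGroup G] [DecidableEq G] (D : Finset G) : Matrix G G ℤ :=
  Matrix.of fun i j => if j - i ∈ D then 1 else -1

/-- The matrix
`H(D₁,D₂) = [[1, 1, 𝟙, -𝟙], [-1, 1, -𝟙, -𝟙], [-𝟙ᵀ, 𝟙ᵀ, -M₁, -M₂], [𝟙ᵀ, 𝟙ᵀ, M₂ᵀ, -M₁ᵀ]]`,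
where `M₁`, `M₂` are the type-1 matrices of `D₁`, `D₂`. -/
def HSDS {G : Type*} [AddCommGroup G] [DecidableEq G] (D₁ D₂ : Finset G) :
    Matrix (Fin 2 ⊕ (G ⊕ G)) (Fin 2 ⊕ (G ⊕ G)) ℤ :=
  Matrix.fromBlocks
    !![1, 1; -1, 1]
    (Matrix.of fun i j =>
      if i = 0 then Sum.elim (fun _ => (1 : ℤ)) (fun _ => -1) j else -1)
    (Matrix.of fun i j =>
      Sum.elim (fun _ => if j = 0 then (-1 : ℤ) else 1) (fun _ => 1) i)
    (Matrix.fromBlocks (-(type1 D₁)) (-(type1 D₂)) (type1 D₂)ᵀ (-(type1 D₁)ᵀ))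

/-- `P` is a monomial matrix with nonzero entries in `{1, -1}`. -/
def IsSignedPerm {κ : Type*} [DecidableEq κ] (P : Matrix κ κ ℤ) : Prop :=
  ∃ σ : Equiv.Perm κ, ∃ s : κ → ℤ, (∀ i, s i = 1 ∨ s i = -1) ∧
    ∀ i j, P i j = if j = σ i then s i else 0

/-- Two (Hadamard) matrices, possibly indexed by different types, are equivalent if one is
obtained from the other by a relabelling of indices together with left and right
multiplication by `{1, -1}`-monomial matrices. -/
def HadEquiv {ι κ : Type*} [Fintype ι] [Fintype κ] [DecidableEq ι] [DecidableEq κ]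
    (H : Matrix ι ι ℤ) (K : Matrix κ κ ℤ) : Prop :=
  ∃ e : ι ≃ κ, ∃ P Q : Matrix κ κ ℤ, IsSignedPerm P ∧ IsSignedPerm Q ∧
    K = P * (Matrix.reindex e e H) * Q

/-- The coset `C_i = ω^i ⟨ω⁴⟩` of the subgroup `⟨ω⁴⟩` of `𝔽_p^×`, viewed inside `𝔽_p`. -/
noncomputable def Cset (p : ℕ) [NeZero p] (ω : (ZMod p)ˣ) (i : ℕ) : Finset (ZMod p) :=
  open scoped Classical in
  Finset.univ.filter fun x =>
    ∃ c ∈ Subgroup.zpowers (ω ^ 4), x = (ω : ZMod p) ^ i * ((c : (ZMod p)ˣ) : ZMod p)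


section NT
variable {p : ℕ} [Fact p.Prime] (ω : (ZMod p)ˣ)

lemma nv_pow_two (u : (ZMod p)ˣ) (m : ℤ) : ((u ^ m : (ZMod p)ˣ) : ZMod p) ^ 2
    = ((u ^ (2 * m) : (ZMod p)ˣ) : ZMod p) := by
  rw [← Units.val_pow_eq_pow_val, ← zpow_natCast (u ^ m) 2, ← _root_.zpow_mul]
  norm_num [mul_comm]

lemma nv_zpow_eq_zpow_iff (hω : ∀ x : (ZMod p)ˣ, x ∈ Subgroup.zpowers ω) (m n : ℤ) :
    ω ^ m = ω ^ n ↔ ((p : ℤ) - 1) ∣ (m - n) := by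
  have ho : orderOf ω = p - 1 := by
    rw [orderOf_eq_card_of_forall_mem_zpowers hω, Nat.card_eq_fintype_card, ZMod.card_units]
  have hp1 : 1 ≤ p := (Fact.out : p.Prime).one_lt.le
  constructor
  · intro h
    have h1 : ω ^ (m - n) = 1 := by rw [_root_.zpow_sub, h, mul_inv_cancel]
    have h2 := orderOf_dvd_iff_zpow_eq_one.mpr h1
    rwa [ho, Int.natCast_sub hp1, Int.natCast_one] at h2
  · intro h
    have h1 : ω ^ (m - n) = 1 := by
      apply orderOf_dvd_iff_zpow_eq_one.mp
      rwa [ho, Int.natCast_sub hp1, Int.natCast_one]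
    calc ω ^ m = ω ^ (m - n) * ω ^ n := by rw [← _root_.zpow_add]; ring_nf
    _ = ω ^ n := by rw [h1, one_mul]

lemma exists_index (hω : ∀ x : (ZMod p)ˣ, x ∈ Subgroup.zpowers ω) (d : ZMod p) (hd : d ≠ 0) :
    ∃ n : ℤ, ((ω ^ n : (ZMod p)ˣ) : ZMod p) = d := by
  obtain ⟨u, hu⟩ := hd.isUnit
  obtain ⟨n, hn⟩ := Subgroup.mem_zpowers_iff.mp (hω u)
  exact ⟨n, by rw [hn, hu]⟩

lemma sq_iff (hω : ∀ x : (ZMod p)ˣ, x ∈ Subgroup.zpowers ω) (hp24 : p % 24 = 5) (n : ℤ) :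
    (∃ c : ZMod p, c ≠ 0 ∧ c ^ 2 = ((ω ^ n : (ZMod p)ˣ) : ZMod p)) ↔ 2 ∣ n := by
  obtain ⟨k, hk⟩ : ∃ k, p = 24 * k + 5 := ⟨p / 24, by omega⟩
  have hpz : (p : ℤ) = 24 * k + 5 := by exact_mod_cast hk
  constructor
  · rintro ⟨c, hc0, hc⟩
    obtain ⟨m, hm⟩ := exists_index ω hω c hc0
    have h2 : ω ^ (2 * m) = ω ^ n := Units.ext (by rw [← nv_pow_two, hm, hc])
    obtain ⟨j, hj⟩ := (nv_zpow_eq_zpow_iff ω hω _ _).mp h2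
    rw [hpz] at hj
    have h4 : (4:ℤ) ∣ 2 * m - n := ⟨(6 * k + 1) * j, by rw [hj]; ring⟩
    omega
  · rintro ⟨m, rfl⟩
    exact ⟨((ω ^ m : (ZMod p)ˣ) : ZMod p), Units.ne_zero _, nv_pow_two ω m⟩

lemma pow4_iff (hω : ∀ x : (ZMod p)ˣ, x ∈ Subgroup.zpowers ω) (hp24 : p % 24 = 5) (n : ℤ) :
    (∃ c : ZMod p, c ≠ 0 ∧ c ^ 2 = ((ω ^ n : (ZMod p)ˣ) : ZMod p) ∧ ∃ e : ZMod p, e ^ 2 = c)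
      ↔ 4 ∣ n := by
  obtain ⟨k, hk⟩ : ∃ k, p = 24 * k + 5 := ⟨p / 24, by omega⟩
  have hpz : (p : ℤ) = 24 * k + 5 := by exact_mod_cast hk
  constructor
  · rintro ⟨c, hc0, hc, e, he⟩
    have he0 : e ≠ 0 := by rintro rfl; rw [← he] at hc0; simp at hc0
    obtain ⟨m, hm⟩ := exists_index ω hω e he0
    have h2 : ω ^ (2 * (2 * m)) = ω ^ n := by
      apply Units.ext
      rw [← hc, ← nv_pow_two, ← nv_pow_two, hm, he]
    obtain ⟨j, hj⟩ := (nv_zpow_eq_zpow_iff ω hω _ _).mp h2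
    rw [hpz] at hj
    have h4 : (4:ℤ) ∣ 2 * (2 * m) - n := ⟨(6 * k + 1) * j, by rw [hj]; ring⟩
    omega
  · rintro ⟨m, rfl⟩
    refine ⟨((ω ^ (2 * m) : (ZMod p)ˣ) : ZMod p), Units.ne_zero _, ?_,
      ((ω ^ m : (ZMod p)ˣ) : ZMod p), nv_pow_two ω m⟩
    rw [nv_pow_two]; ring_nf

end NT

section NT
variable {p : ℕ} [Fact p.Prime] (ω : (ZMod p)ˣ)

lemma zero_not_mem_Cset (i : ℕ) : (0 : ZMod p) ∉ Cset p ω i := by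
  simp only [Cset, Finset.mem_filter, Finset.mem_univ, true_and]
  rintro ⟨c, -, hc⟩
  have h1 : ((ω ^ i : (ZMod p)ˣ) : ZMod p) * ((c : (ZMod p)ˣ) : ZMod p) = 0 := by
    rw [Units.val_pow_eq_pow_val]; exact hc.symm
  rw [← Units.val_mul] at h1
  exact Units.ne_zero _ h1

lemma mem_Cset_iff (hω : ∀ x : (ZMod p)ˣ, x ∈ Subgroup.zpowers ω) (hp24 : p % 24 = 5)
    (d : ZMod p) (n : ℤ) (hd : ((ω ^ n : (ZMod p)ˣ) : ZMod p) = d) (i : ℕ) :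
    d ∈ Cset p ω i ↔ (4 : ℤ) ∣ (n - i) := by
  obtain ⟨k, hk⟩ : ∃ k, p = 24 * k + 5 := ⟨p / 24, by omega⟩
  have hpz : (p : ℤ) = 24 * k + 5 := by exact_mod_cast hk
  have hcast : ∀ m : ℤ, ((ω : ZMod p) ^ i * ((((ω ^ 4) ^ m : (ZMod p)ˣ)) : ZMod p))
      = ((ω ^ ((i : ℤ) + 4 * m) : (ZMod p)ˣ) : ZMod p) := by
    intro m
    rw [_root_.zpow_add, Units.val_mul, zpow_natCast, Units.val_pow_eq_pow_val,
      ← zpow_natCast ω 4, ← _root_.zpow_mul]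
    norm_num
  simp only [Cset, Finset.mem_filter, Finset.mem_univ, true_and]
  constructor
  · rintro ⟨c, hc, hxc⟩
    obtain ⟨m, hm⟩ := Subgroup.mem_zpowers_iff.mp hc
    rw [← hm, hcast m, ← hd] at hxc
    have := (nv_zpow_eq_zpow_iff ω hω _ _).mp (Units.ext hxc.symm)
    obtain ⟨j, hj⟩ := this
    rw [hpz] at hj
    have h4 : (4:ℤ) ∣ ((i : ℤ) + 4 * m) - n := ⟨(6 * k + 1) * j, by rw [hj]; ring⟩
    omega
  · rintro ⟨j, hj⟩
    refine ⟨(ω ^ 4) ^ j, Subgroup.mem_zpowers_iff.mpr ⟨j, rfl⟩, ?_⟩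
    rw [hcast j, ← hd]
    congr 1
    rw [nv_zpow_eq_zpow_iff ω hω]
    exact ⟨0, by omega⟩

end NT

section NT2
variable {p : ℕ} [Fact p.Prime] (ω : (ZMod p)ˣ)

lemma neg_one_index (hω : ∀ x : (ZMod p)ˣ, x ∈ Subgroup.zpowers ω) (hp24 : p % 24 = 5) :
    ∃ r : ℤ, ((ω ^ r : (ZMod p)ˣ) : ZMod p) = -1 ∧ r % 4 = 2 := by
  obtain ⟨k, hk⟩ : ∃ k, p = 24 * k + 5 := ⟨p / 24, by omega⟩
  have hpz : (p : ℤ) = 24 * k + 5 := by exact_mod_cast hk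
  haveI : Fact (2 < p) := ⟨by omega⟩
  have hne : (-1 : ZMod p) ≠ 0 := by
    simp only [ne_eq, neg_eq_zero]; exact one_ne_zero
  obtain ⟨r, hr⟩ := exists_index ω hω (-1) hne
  have hsq : ω ^ (2 * r) = ω ^ (0 : ℤ) := by
    apply Units.ext
    rw [← nv_pow_two, hr]
    norm_num
  obtain ⟨s, hs⟩ := (nv_zpow_eq_zpow_iff ω hω _ _).mp hsq
  rw [hpz] at hs
  have hnd : ω ^ r ≠ ω ^ (0 : ℤ) := by
    intro h
    apply ZMod.neg_one_ne_one (n := p)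
    rw [← hr, h]; norm_num
  rcases Int.even_or_odd s with ⟨s', rfl⟩ | ⟨s', rfl⟩
  · exfalso
    apply hnd
    rw [nv_zpow_eq_zpow_iff ω hω, hpz]
    exact ⟨s', by linarith [hs]⟩
  · have h2R : 2 * ((12 * (k:ℤ) + 2) * (2 * s' + 1)) = (24 * k + 5 - 1) * (2 * s' + 1) := by ring
    have hrv : r = (12 * (k:ℤ) + 2) * (2 * s' + 1) := by linarith [hs, h2R]
    have hrv2 : r = 4 * (6 * (k:ℤ) * s' + 3 * k + s') + 2 := by rw [hrv]; ring
    exact ⟨r, hr, by omega⟩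

end NT2

section HE
set_option linter.unusedSectionVars false
variable {ι κ : Type*} [Fintype ι] [Fintype κ] [DecidableEq ι] [DecidableEq κ]

lemma isSignedPerm_diagonal (s : κ → ℤ) (hs : ∀ i, s i = 1 ∨ s i = -1) :
    IsSignedPerm (Matrix.diagonal s) := by
  refine ⟨Equiv.refl κ, s, hs, fun i j => ?_⟩
  rw [Matrix.diagonal_apply]
  simp [eq_comm]

lemma hadEquiv_of_diag (H : Matrix ι ι ℤ) (K : Matrix κ κ ℤ) (e : ι ≃ κ) (sP sQ : κ → ℤ)
    (hP : ∀ i, sP i = 1 ∨ sP i = -1) (hQ : ∀ i, sQ i = 1 ∨ sQ i = -1)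
    (h : ∀ i j : ι, K (e i) (e j) = sP (e i) * H i j * sQ (e j)) :
    HadEquiv H K := by
  refine ⟨e, Matrix.diagonal sP, Matrix.diagonal sQ, isSignedPerm_diagonal sP hP,
    isSignedPerm_diagonal sQ hQ, ?_⟩
  ext i j
  rw [Matrix.mul_diagonal, Matrix.diagonal_mul, Matrix.reindex_apply, Matrix.submatrix_apply]
  have h2 := h (e.symm i) (e.symm j)
  rwa [e.apply_symm_apply, e.apply_symm_apply] at h2

end HE


section VAL
variable {p : ℕ} [Fact p.Prime] (ω : (ZMod p)ˣ)

lemma RX_diag (s : ZMod p) : RX p s s = 0 := by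
  simp only [RX, Matrix.of_apply, sub_self]
  rw [if_neg, if_neg]
  · rintro ⟨c, h0, h2⟩
    exact h0 ((pow_eq_zero_iff (two_ne_zero)).mp h2)
  · rintro ⟨c, h0, h2, -⟩
    exact h0 ((pow_eq_zero_iff (two_ne_zero)).mp h2)

lemma RY_diag (s : ZMod p) : RY p s s = 0 := by
  simp only [RY, Matrix.of_apply, sub_self, mul_zero]
  rw [if_neg, if_neg]
  · rintro ⟨c, h0, h2⟩
    exact h0 ((pow_eq_zero_iff (two_ne_zero)).mp h2)
  · rintro ⟨c, h0, h2, -⟩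
    exact h0 ((pow_eq_zero_iff (two_ne_zero)).mp h2)

lemma RX_eq (hω : ∀ x : (ZMod p)ˣ, x ∈ Subgroup.zpowers ω) (hp24 : p % 24 = 5)
    (s t : ZMod p) (n : ℤ) (hd : ((ω ^ n : (ZMod p)ˣ) : ZMod p) = t - s) :
    RX p s t = if n % 4 = 0 then 1 else if n % 4 = 2 then -1 else 0 := by
  simp only [RX, Matrix.of_apply, ← hd, pow4_iff ω hω hp24, sq_iff ω hω hp24]
  split_ifs <;> omega

lemma RY_eq (hω : ∀ x : (ZMod p)ˣ, x ∈ Subgroup.zpowers ω) (hp24 : p % 24 = 5)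
    (s t : ZMod p) (m : ℤ) (hd : ((ω ^ m : (ZMod p)ˣ) : ZMod p) = 2 * (t - s)) :
    RY p s t = if m % 4 = 0 then 1 else if m % 4 = 2 then -1 else 0 := by
  simp only [RY, Matrix.of_apply, ← hd, pow4_iff ω hω hp24, sq_iff ω hω hp24]
  split_ifs <;> omega

end VAL

def eEquiv (p : ℕ) : NVIdx p ≃ (Fin 2 ⊕ (ZMod p ⊕ ZMod p)) where
  toFun := fun i => match i with
    | .inl none => .inl 0
    | .inl (some s) => .inr (.inl s)
    | .inr none => .inl 1
    | .inr (some s) => .inr (.inr s)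
  invFun := fun i => match i with
    | .inl j => if j = 0 then .inl none else .inr none
    | .inr (.inl s) => .inl (some s)
    | .inr (.inr s) => .inr (some s)
  left_inv := by rintro ((_|s)|(_|s)) <;> simp
  right_inv := by
    rintro (j|(s|s))
    · fin_cases j <;> simp
    · rfl
    · rfl


set_option maxHeartbeats 2000000 in
/-- for a prime `p ≡ 5 (mod 24)`, a primitive element `ω` of `𝔽_p` and
`ε ∈ {1, 3}` with `-2 ∈ C_ε`: the Hadamard matrix `H_{NV^(1)(p)}` is equivalent to
`H(C₂ ∪ C_{2+ε}, C₀ ∪ C_{ε+2})`, and `H_{NV^(-1)(p)}` is equivalent to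
`H(C₀ ∪ C_ε, C₂ ∪ C_ε)` (subscripts read modulo 4). -/
theorem Hnv_equiv_HSDS (p : ℕ) [Fact p.Prime] (hp : p % 24 = 5)
    (ω : (ZMod p)ˣ) (hω : ∀ x : (ZMod p)ˣ, x ∈ Subgroup.zpowers ω)
    (ε : ℕ) (hε : ε = 1 ∨ ε = 3) (hm2 : (-2 : ZMod p) ∈ Cset p ω ε) :
    HadEquiv (Hnv p 1)
      (HSDS (Cset p ω 2 ∪ Cset p ω (2 + ε)) (Cset p ω 0 ∪ Cset p ω (ε + 2))) ∧
    HadEquiv (Hnv p (-1))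
      (HSDS (Cset p ω 0 ∪ Cset p ω ε) (Cset p ω 2 ∪ Cset p ω ε)) := by
  have hp5 : 5 ≤ p := by
    rcases Nat.lt_or_ge p 5 with h | h
    · interval_cases p <;> omega
    · exact h
  have hm2ne : (-2 : ZMod p) ≠ 0 := by
    intro h
    have h2 : ((2:ℕ) : ZMod p) = 0 := by push_cast; linear_combination -h
    rw [ZMod.natCast_eq_zero_iff] at h2
    have := Nat.le_of_dvd (by norm_num) h2
    omega
  obtain ⟨r, hr, hr4⟩ := neg_one_index ω hω hp
  obtain ⟨m2, hm2v⟩ := exists_index ω hω (-2) hm2ne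
  have hm2i : (4:ℤ) ∣ m2 - (ε:ℤ) := (mem_Cset_iff ω hω hp (-2) m2 hm2v ε).mp hm2
  have hεz : (ε:ℤ) = 1 ∨ (ε:ℤ) = 3 := by rcases hε with rfl | rfl <;> norm_num
  constructor
  · apply hadEquiv_of_diag _ _ (eEquiv p) (fun _ => 1) (fun _ => 1)
      (fun _ => Or.inl rfl) (fun _ => Or.inl rfl)
    rintro ((_|s)|(_|s)) ((_|t)|(_|t)) <;>
      simp only [eEquiv, Equiv.coe_fn_mk, Sum.elim_inl, Sum.elim_inr, one_mul, mul_one,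
        neg_mul, mul_neg, neg_neg, neg_sub, neg_add_rev,
        HSDS, Hnv, Matrix.fromBlocks_apply₁₁, Matrix.fromBlocks_apply₁₂,
        Matrix.fromBlocks_apply₂₁, Matrix.fromBlocks_apply₂₂, Matrix.of_apply,
        Matrix.neg_apply, Matrix.transpose_apply, type1, Matrix.add_apply, Matrix.sub_apply,
        Matrix.smul_apply, Matrix.one_apply, smul_eq_mul, Xmat, Ymat,
        reduceCtorEq, Option.some.injEq, reduceIte] <;>
      try norm_num [Matrix.cons_val_zero, Matrix.cons_val_one, Matrix.head_cons,
        Matrix.head_fin_const]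
    · rcases eq_or_ne t s with rfl | hne
      · simp [RX_diag, RY_diag, zero_not_mem_Cset, sub_self]
      · have hd0 : t - s ≠ 0 := sub_ne_zero.mpr hne
        obtain ⟨n, hn⟩ := exists_index ω hω _ hd0
        have hst : ((ω ^ (n + r) : (ZMod p)ˣ) : ZMod p) = s - t := by
          rw [_root_.zpow_add, Units.val_mul, hn, hr]; ring
        have h2ts : ((ω ^ (n + r + m2) : (ZMod p)ˣ) : ZMod p) = 2 * (t - s) := by
          rw [_root_.zpow_add, _root_.zpow_add, Units.val_mul, Units.val_mul, hn, hr, hm2v]; ring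
        have h2st : ((ω ^ (n + m2) : (ZMod p)ˣ) : ZMod p) = 2 * (s - t) := by
          rw [_root_.zpow_add, Units.val_mul, hn, hm2v]; ring
        have hnst : ¬ s = t := fun h => hne h.symm
        rw [RX_eq ω hω hp s t n hn, RY_eq ω hω hp t s (n + m2) h2st]
        simp only [mem_Cset_iff ω hω hp (t - s) n hn, if_neg hnst]
        push_cast
        split_ifs <;> omega
    · rcases eq_or_ne t s with rfl | hne
      · simp [RX_diag, RY_diag, zero_not_mem_Cset, sub_self]
      · have hd0 : t - s ≠ 0 := sub_ne_zero.mpr hne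
        obtain ⟨n, hn⟩ := exists_index ω hω _ hd0
        have hst : ((ω ^ (n + r) : (ZMod p)ˣ) : ZMod p) = s - t := by
          rw [_root_.zpow_add, Units.val_mul, hn, hr]; ring
        have h2ts : ((ω ^ (n + r + m2) : (ZMod p)ˣ) : ZMod p) = 2 * (t - s) := by
          rw [_root_.zpow_add, _root_.zpow_add, Units.val_mul, Units.val_mul, hn, hr, hm2v]; ring
        have h2st : ((ω ^ (n + m2) : (ZMod p)ˣ) : ZMod p) = 2 * (s - t) := by
          rw [_root_.zpow_add, Units.val_mul, hn, hm2v]; ring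
        have hnst : ¬ s = t := fun h => hne h.symm
        rw [RY_eq ω hω hp s t (n + r + m2) h2ts, RX_eq ω hω hp t s (n + r) hst]
        simp only [mem_Cset_iff ω hω hp (t - s) n hn, if_neg hnst]
        push_cast
        split_ifs <;> omega
    · rcases eq_or_ne t s with rfl | hne
      · simp [RX_diag, RY_diag, zero_not_mem_Cset, sub_self]
      · have hd0 : t - s ≠ 0 := sub_ne_zero.mpr hne
        obtain ⟨n, hn⟩ := exists_index ω hω _ hd0
        have hst : ((ω ^ (n + r) : (ZMod p)ˣ) : ZMod p) = s - t := by
          rw [_root_.zpow_add, Units.val_mul, hn, hr]; ring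
        have h2ts : ((ω ^ (n + r + m2) : (ZMod p)ˣ) : ZMod p) = 2 * (t - s) := by
          rw [_root_.zpow_add, _root_.zpow_add, Units.val_mul, Units.val_mul, hn, hr, hm2v]; ring
        have h2st : ((ω ^ (n + m2) : (ZMod p)ˣ) : ZMod p) = 2 * (s - t) := by
          rw [_root_.zpow_add, Units.val_mul, hn, hm2v]; ring
        have hnst : ¬ s = t := fun h => hne h.symm
        rw [RY_eq ω hω hp t s (n + m2) h2st, RX_eq ω hω hp s t n hn]
        simp only [mem_Cset_iff ω hω hp (s - t) (n + r) hst, if_neg hnst]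
        push_cast
        split_ifs <;> omega
    · rcases eq_or_ne t s with rfl | hne
      · simp [RX_diag, RY_diag, zero_not_mem_Cset, sub_self]
      · have hd0 : t - s ≠ 0 := sub_ne_zero.mpr hne
        obtain ⟨n, hn⟩ := exists_index ω hω _ hd0
        have hst : ((ω ^ (n + r) : (ZMod p)ˣ) : ZMod p) = s - t := by
          rw [_root_.zpow_add, Units.val_mul, hn, hr]; ring
        have h2ts : ((ω ^ (n + r + m2) : (ZMod p)ˣ) : ZMod p) = 2 * (t - s) := by
          rw [_root_.zpow_add, _root_.zpow_add, Units.val_mul, Units.val_mul, hn, hr, hm2v]; ring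
        have h2st : ((ω ^ (n + m2) : (ZMod p)ˣ) : ZMod p) = 2 * (s - t) := by
          rw [_root_.zpow_add, Units.val_mul, hn, hm2v]; ring
        have hnst : ¬ s = t := fun h => hne h.symm
        rw [RX_eq ω hω hp t s (n + r) hst, RY_eq ω hω hp s t (n + r + m2) h2ts]
        simp only [mem_Cset_iff ω hω hp (s - t) (n + r) hst, if_neg hnst]
        push_cast
        split_ifs <;> omega
  · apply hadEquiv_of_diag _ _ (eEquiv p) (Sum.elim (fun _ => 1) (fun _ => -1))
      (Sum.elim (fun _ => -1) (fun _ => 1)) ?_ ?_ ?_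
    · rintro (i|i) <;> simp
    · rintro (i|i) <;> simp
    rintro ((_|s)|(_|s)) ((_|t)|(_|t)) <;>
      simp only [eEquiv, Equiv.coe_fn_mk, Sum.elim_inl, Sum.elim_inr, one_mul, mul_one,
        neg_mul, mul_neg, neg_neg, neg_sub, neg_add_rev,
        HSDS, Hnv, Matrix.fromBlocks_apply₁₁, Matrix.fromBlocks_apply₁₂,
        Matrix.fromBlocks_apply₂₁, Matrix.fromBlocks_apply₂₂, Matrix.of_apply,
        Matrix.neg_apply, Matrix.transpose_apply, type1, Matrix.add_apply, Matrix.sub_apply,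
        Matrix.smul_apply, Matrix.one_apply, smul_eq_mul, Xmat, Ymat,
        reduceCtorEq, Option.some.injEq, reduceIte] <;>
      try norm_num [Matrix.cons_val_zero, Matrix.cons_val_one, Matrix.head_cons,
        Matrix.head_fin_const]
    · rcases eq_or_ne t s with rfl | hne
      · simp [RX_diag, RY_diag, zero_not_mem_Cset, sub_self]
      · have hd0 : t - s ≠ 0 := sub_ne_zero.mpr hne
        obtain ⟨n, hn⟩ := exists_index ω hω _ hd0
        have hst : ((ω ^ (n + r) : (ZMod p)ˣ) : ZMod p) = s - t := by
          rw [_root_.zpow_add, Units.val_mul, hn, hr]; ring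
        have h2ts : ((ω ^ (n + r + m2) : (ZMod p)ˣ) : ZMod p) = 2 * (t - s) := by
          rw [_root_.zpow_add, _root_.zpow_add, Units.val_mul, Units.val_mul, hn, hr, hm2v]; ring
        have h2st : ((ω ^ (n + m2) : (ZMod p)ˣ) : ZMod p) = 2 * (s - t) := by
          rw [_root_.zpow_add, Units.val_mul, hn, hm2v]; ring
        have hnst : ¬ s = t := fun h => hne h.symm
        rw [RX_eq ω hω hp s t n hn, RY_eq ω hω hp t s (n + m2) h2st]
        simp only [mem_Cset_iff ω hω hp (t - s) n hn, if_neg hnst]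
        push_cast
        split_ifs <;> omega
    · rcases eq_or_ne t s with rfl | hne
      · simp [RX_diag, RY_diag, zero_not_mem_Cset, sub_self]
      · have hd0 : t - s ≠ 0 := sub_ne_zero.mpr hne
        obtain ⟨n, hn⟩ := exists_index ω hω _ hd0
        have hst : ((ω ^ (n + r) : (ZMod p)ˣ) : ZMod p) = s - t := by
          rw [_root_.zpow_add, Units.val_mul, hn, hr]; ring
        have h2ts : ((ω ^ (n + r + m2) : (ZMod p)ˣ) : ZMod p) = 2 * (t - s) := by
          rw [_root_.zpow_add, _root_.zpow_add, Units.val_mul, Units.val_mul, hn, hr, hm2v]; ring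
        have h2st : ((ω ^ (n + m2) : (ZMod p)ˣ) : ZMod p) = 2 * (s - t) := by
          rw [_root_.zpow_add, Units.val_mul, hn, hm2v]; ring
        have hnst : ¬ s = t := fun h => hne h.symm
        rw [RY_eq ω hω hp s t (n + r + m2) h2ts, RX_eq ω hω hp t s (n + r) hst]
        simp only [mem_Cset_iff ω hω hp (t - s) n hn, if_neg hnst]
        push_cast
        split_ifs <;> omega
    · rcases eq_or_ne t s with rfl | hne
      · simp [RX_diag, RY_diag, zero_not_mem_Cset, sub_self]
      · have hd0 : t - s ≠ 0 := sub_ne_zero.mpr hne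
        obtain ⟨n, hn⟩ := exists_index ω hω _ hd0
        have hst : ((ω ^ (n + r) : (ZMod p)ˣ) : ZMod p) = s - t := by
          rw [_root_.zpow_add, Units.val_mul, hn, hr]; ring
        have h2ts : ((ω ^ (n + r + m2) : (ZMod p)ˣ) : ZMod p) = 2 * (t - s) := by
          rw [_root_.zpow_add, _root_.zpow_add, Units.val_mul, Units.val_mul, hn, hr, hm2v]; ring
        have h2st : ((ω ^ (n + m2) : (ZMod p)ˣ) : ZMod p) = 2 * (s - t) := by
          rw [_root_.zpow_add, Units.val_mul, hn, hm2v]; ring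
        have hnst : ¬ s = t := fun h => hne h.symm
        rw [RY_eq ω hω hp t s (n + m2) h2st, RX_eq ω hω hp s t n hn]
        simp only [mem_Cset_iff ω hω hp (s - t) (n + r) hst, if_neg hnst]
        push_cast
        split_ifs <;> omega
    · rcases eq_or_ne t s with rfl | hne
      · simp [RX_diag, RY_diag, zero_not_mem_Cset, sub_self]
      · have hd0 : t - s ≠ 0 := sub_ne_zero.mpr hne
        obtain ⟨n, hn⟩ := exists_index ω hω _ hd0
        have hst : ((ω ^ (n + r) : (ZMod p)ˣ) : ZMod p) = s - t := by
          rw [_root_.zpow_add, Units.val_mul, hn, hr]; ring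
        have h2ts : ((ω ^ (n + r + m2) : (ZMod p)ˣ) : ZMod p) = 2 * (t - s) := by
          rw [_root_.zpow_add, _root_.zpow_add, Units.val_mul, Units.val_mul, hn, hr, hm2v]; ring
        have h2st : ((ω ^ (n + m2) : (ZMod p)ˣ) : ZMod p) = 2 * (s - t) := by
          rw [_root_.zpow_add, Units.val_mul, hn, hm2v]; ring
        have hnst : ¬ s = t := fun h => hne h.symm
        rw [RX_eq ω hω hp t s (n + r) hst, RY_eq ω hω hp s t (n + r + m2) h2ts]
        simp only [mem_Cset_iff ω hω hp (s - t) (n + r) hst, if_neg hnst]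
        push_cast
        split_ifs <;> omega
end

section
/- Let p be a prime with p ≡ 5 (mod 24) and let a ∈ {1,−1}. Then the ternary code NV^(a)(p) of length 2(p+1) is self-dual: NV^(a)(p) = NV^(a)(p)^⊥. -/
set_option linter.unusedSectionVars false
set_option maxHeartbeats 1000000


open Matrix

namespace NVaux
open Finset

variable (p : ℕ) [Fact p.Prime]

local notation "χ" => quadraticChar (ZMod p)

/-- The function underlying the entries of `RX`. -/
def psi (s : ZMod p) : ℤ :=
  if ∃ c : ZMod p, c ≠ 0 ∧ c ^ 2 = s ∧ ∃ d : ZMod p, d ^ 2 = c then 1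
  else if ∃ c : ZMod p, c ≠ 0 ∧ c ^ 2 = s then -1
  else 0

variable {p}

lemma hp8 (hp : p % 24 = 5) : p % 8 = 5 := by omega
lemma hp4 (hp : p % 24 = 5) : p % 4 = 1 := by omega
lemma hp3 (hp : p % 24 = 5) : p % 3 = 2 := by omega
lemma pne2 (hp : p % 24 = 5) : p ≠ 2 := by omega

lemma ringChar_ne_two (hp : p % 24 = 5) : ringChar (ZMod p) ≠ 2 := by
  rw [ZMod.ringChar_zmod_n]; exact pne2 hp

lemma isSquare_neg_one (hp : p % 24 = 5) : IsSquare (-1 : ZMod p) :=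
  (ZMod.exists_sq_eq_neg_one_iff).2 (by omega)

lemma not_isSquare_two (hp : p % 24 = 5) : ¬ IsSquare (2 : ZMod p) := by
  rw [ZMod.exists_sq_eq_two_iff (pne2 hp)]; omega

lemma chi_two (hp : p % 24 = 5) : χ 2 = -1 :=
  (quadraticChar_neg_one_iff_not_isSquare).2 (not_isSquare_two hp)

lemma sq_eq_sq'' {x y : ZMod p} (h : x ^ 2 = y ^ 2) : x = y ∨ x = -y := by
  have : (x - y) * (x + y) = 0 := by ring_nf; linear_combination h
  rcases mul_eq_zero.1 this with h' | h'
  · left; exact sub_eq_zero.1 h'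
  · right; linear_combination h'

lemma psi_sq (hp : p % 24 = 5) (c : ZMod p) : psi p (c ^ 2) = χ c := by
  by_cases hc : c = 0
  · subst hc
    rw [psi]
    have h1 : ¬ ∃ c' : ZMod p, c' ≠ 0 ∧ c' ^ 2 = (0:ZMod p) ^ 2 ∧ ∃ d : ZMod p, d ^ 2 = c' := by
      rintro ⟨c', hc', h2, -⟩
      exact hc' (by simpa [pow_eq_zero_iff] using h2)
    have h2 : ¬ ∃ c' : ZMod p, c' ≠ 0 ∧ c' ^ 2 = (0:ZMod p) ^ 2 := by
      rintro ⟨c', hc', h2⟩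
      exact hc' (by simpa [pow_eq_zero_iff] using h2)
    rw [if_neg h1, if_neg h2, MulChar.map_zero]
  · rw [psi]
    by_cases hsq : IsSquare c
    · have h1 : ∃ c' : ZMod p, c' ≠ 0 ∧ c' ^ 2 = c ^ 2 ∧ ∃ d : ZMod p, d ^ 2 = c' := by
        obtain ⟨r, hr⟩ := hsq
        exact ⟨c, hc, rfl, r, by rw [sq, hr]⟩
      rw [if_pos h1, (quadraticChar_one_iff_isSquare hc).2 hsq]
    · have h1 : ¬ ∃ c' : ZMod p, c' ≠ 0 ∧ c' ^ 2 = c ^ 2 ∧ ∃ d : ZMod p, d ^ 2 = c' := by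
        rintro ⟨c', hc', h2, d, hd⟩
        rcases sq_eq_sq'' h2 with rfl | rfl
        · exact hsq ⟨d, by rw [← sq, hd]⟩
        · obtain ⟨r, hr⟩ := isSquare_neg_one hp
          refine hsq ⟨r * d, ?_⟩
          have : c = (-1) * -c := by ring
          rw [this, hr, ← hd]; ring
      rw [if_neg h1, if_pos ⟨c, hc, rfl⟩,
        quadraticChar_neg_one_iff_not_isSquare.2 hsq]

lemma two_psi (hp : p % 24 = 5) (u : ZMod p) :
    ∑ c : ZMod p, (if c ^ 2 = u then χ c else 0) = 2 * psi p u := by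
  by_cases h : ∃ c₀ : ZMod p, c₀ ≠ 0 ∧ c₀ ^ 2 = u
  · obtain ⟨c₀, hc₀, rfl⟩ := h
    rw [← Finset.sum_filter]
    have hfil : Finset.univ.filter (fun c : ZMod p => c ^ 2 = c₀ ^ 2) = {c₀, -c₀} := by
      ext x
      simp only [mem_filter, mem_univ, true_and, mem_insert, mem_singleton]
      constructor
      · exact sq_eq_sq''
      · rintro (rfl | rfl) <;> ring
    have hne : c₀ ≠ -c₀ := by
      intro h'
      have h2 : (2 : ZMod p) * c₀ = 0 := by linear_combination h'
      rcases mul_eq_zero.1 h2 with h3 | h3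
      · exact (Ring.two_ne_zero (ringChar_ne_two hp)) h3
      · exact hc₀ h3
    rw [hfil, Finset.sum_pair hne, psi_sq hp]
    have hneg : χ (-c₀) = χ c₀ := by
      have : (-c₀ : ZMod p) = -1 * c₀ := by ring
      rw [this, _root_.map_mul,
        (quadraticChar_one_iff_isSquare (by exact neg_ne_zero.2 one_ne_zero)).2
          (isSquare_neg_one hp), one_mul]
    rw [hneg]; ring
  · have hpsi : psi p u = 0 := by
      rw [psi, if_neg, if_neg h]
      rintro ⟨c', hc', h2, -⟩; exact h ⟨c', hc', h2⟩
    rw [hpsi, mul_zero]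
    apply Finset.sum_eq_zero
    intro c _
    by_cases hc : c = 0
    · subst hc; simp
    · rw [if_neg fun hc2 => h ⟨c, hc, hc2⟩]

lemma chi_i (hp : p % 24 = 5) {i : ZMod p} (hi : i ^ 2 = -1) : χ i = -1 := by
  have hi0 : i ≠ 0 := by
    intro h; rw [h] at hi; simp at hi
  have h1i : (1 : ZMod p) + i ≠ 0 := by
    intro h
    have : i = -1 := by linear_combination h
    rw [this] at hi
    have : (2 : ZMod p) = 0 := by linear_combination hi
    exact (Ring.two_ne_zero (ringChar_ne_two hp)) this
  have hsq : ((1 : ZMod p) + i) ^ 2 = 2 * i := by linear_combination hi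
  have h2 : χ 2 * χ i = χ ((1 + i)) ^ 2 := by
    rw [← _root_.map_mul, ← _root_.map_pow, hsq]
  rw [quadraticChar_sq_one h1i, chi_two hp] at h2
  linarith

lemma psi_odd (hp : p % 24 = 5) (u : ZMod p) : psi p (-u) = - psi p u := by
  obtain ⟨r, hr⟩ := isSquare_neg_one hp
  have hi : r ^ 2 = -1 := by rw [sq, ← hr]
  have hchir : χ r = -1 := chi_i hp hi
  have h2 : ∑ c : ZMod p, (if c ^ 2 = -u then χ c else 0)
      = - ∑ c : ZMod p, (if c ^ 2 = u then χ c else 0) := by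
    have hbij : Function.Bijective (fun c : ZMod p => r * c) := by
      have hr0 : r ≠ 0 := by
        intro h; rw [h] at hi; simp at hi
      exact (mulLeft_bijective₀ r hr0)
    have hterm : ∀ c : ZMod p, -(if c ^ 2 = u then χ c else 0)
        = (if (r * c) ^ 2 = -u then χ (r * c) else 0) := by
      intro c
      have hcond : ((r * c) ^ 2 = -u) ↔ (c ^ 2 = u) := by
        constructor
        · intro h
          have h2 : -((r * c) ^ 2) = -(-u) := by rw [h]
          rw [neg_neg] at h2
          rw [← h2, mul_pow, hi]; ring
        · intro h; rw [mul_pow, hi, h]; ring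
      by_cases h : c ^ 2 = u
      · rw [if_pos (hcond.2 h), if_pos h, _root_.map_mul, hchir]; ring
      · rw [if_neg (fun hh => h (hcond.1 hh)), if_neg h, neg_zero]
    rw [(Fintype.sum_bijective _ hbij _ _ hterm).symm, Finset.sum_neg_distrib]
  rw [two_psi hp, two_psi hp] at h2
  linarith

lemma sum_psi (hp : p % 24 = 5) : ∑ u : ZMod p, psi p u = 0 := by
  have h : ∑ u : ZMod p, psi p u = ∑ u : ZMod p, psi p (-u) :=
    (Fintype.sum_bijective _ neg_involutive.bijective _ _ (fun u => rfl)).symm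
  simp_rw [psi_odd hp, Finset.sum_neg_distrib] at h
  linarith

lemma sum_psi_sq (hp : p % 24 = 5) :
    2 * ∑ u : ZMod p, psi p u * psi p u = (p : ℤ) - 1 := by
  have : 2 * ∑ u : ZMod p, psi p u * psi p u
      = ∑ u : ZMod p, (∑ c : ZMod p, (if c ^ 2 = u then χ c else 0)) * psi p u := by
    rw [Finset.mul_sum]
    exact Finset.sum_congr rfl fun u _ => by rw [two_psi hp]; ring
  rw [this]
  simp_rw [Finset.sum_mul, ite_mul, zero_mul]
  rw [Finset.sum_comm]
  have : ∀ c : ZMod p, (∑ u : ZMod p, if c ^ 2 = u then χ c * psi p u else 0)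
      = χ c * χ c := by
    intro c
    rw [Finset.sum_ite_eq]
    simp [psi_sq hp]
  rw [Finset.sum_congr rfl fun c _ => this c]
  have : ∀ c : ZMod p, χ c * χ c = if c = 0 then 0 else 1 := by
    intro c
    by_cases hc : c = 0
    · simp [hc]
    · rw [if_neg hc, ← sq, quadraticChar_sq_one hc]
  rw [Finset.sum_congr rfl fun c _ => this c,
    Finset.sum_congr rfl (fun c (_ : c ∈ Finset.univ) =>
      show (if c = (0:ZMod p) then (0:ℤ) else 1) = 1 - (if c = 0 then 1 else 0) by
        split <;> ring),
    Finset.sum_sub_distrib, Finset.sum_const,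
    Finset.sum_ite_eq' Finset.univ (0 : ZMod p) (fun _ => (1:ℤ))]
  simp [ZMod.card p]

lemma htwo (hp : p % 24 = 5) : (2 : ZMod p) ≠ 0 := Ring.two_ne_zero (ringChar_ne_two hp)

lemma chi_neg_one (hp : p % 24 = 5) : χ (-1) = 1 :=
  (quadraticChar_one_iff_isSquare (neg_ne_zero.2 one_ne_zero)).2 (isSquare_neg_one hp)

lemma chi_mul_sq (u : ZMod p) {v : ZMod p} (hv : v ≠ 0) : χ (u * v ^ 2) = χ u := by
  rw [_root_.map_mul, _root_.map_pow, quadraticChar_sq_one hv, mul_one]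

lemma chi_shift (hp : p % 24 = 5) {b : ZMod p} (hb : b ≠ 0) :
    ∑ x : ZMod p, χ x * χ (x + b) = -1 := by
  have h1 : ∑ x : ZMod p, χ x * χ (x + b)
      = ∑ x ∈ Finset.univ.erase (0 : ZMod p), χ x * χ (x + b) := by
    rw [Finset.sum_erase]
    simp
  have h2 : ∑ x ∈ Finset.univ.erase (0 : ZMod p), χ x * χ (x + b)
      = ∑ y ∈ Finset.univ.erase (1 : ZMod p), χ y := by
    refine Finset.sum_nbij' (fun x => 1 + b * x⁻¹) (fun y => b / (y - 1)) ?_ ?_ ?_ ?_ ?_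
    · intro x hx
      have hx0 : x ≠ 0 := Finset.ne_of_mem_erase hx
      simp only [Finset.mem_erase, Finset.mem_univ, and_true]
      intro h
      have : b * x⁻¹ = 0 := by linear_combination h
      rcases mul_eq_zero.1 this with h' | h'
      · exact hb h'
      · exact hx0 (inv_eq_zero.1 h')
    · intro y hy
      have hy1 : y ≠ 1 := Finset.ne_of_mem_erase hy
      simp only [Finset.mem_erase, Finset.mem_univ, and_true]
      exact div_ne_zero hb (sub_ne_zero.2 hy1)
    · intro x hx
      have hx0 : x ≠ 0 := Finset.ne_of_mem_erase hx
      field_simp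
      rw [add_sub_cancel_left, div_self hb]
    · intro y hy
      have hy1 : y ≠ 1 := Finset.ne_of_mem_erase hy
      have h0 : y - 1 ≠ 0 := sub_ne_zero.2 hy1
      field_simp
      ring
    · intro x hx
      have hx0 : x ≠ 0 := Finset.ne_of_mem_erase hx
      have : x + b = x * (1 + b * x⁻¹) := by field_simp
      rw [this, _root_.map_mul, ← mul_assoc, ← sq, quadraticChar_sq_one hx0, one_mul]
  have h3 : ∑ y ∈ Finset.univ.erase (1 : ZMod p), χ y
      = (∑ y : ZMod p, χ y) - χ 1 := by
    rw [Finset.sum_erase_eq_sub (Finset.mem_univ _)]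
  rw [h1, h2, h3, quadraticChar_sum_zero (ringChar_ne_two hp), _root_.map_one]; ring

lemma sum_chi_dsq (hp : p % 24 = 5) {d : ZMod p} (hd : d ≠ 0) :
    ∑ u : ZMod p, χ (d ^ 2 - u ^ 2) = -1 := by
  have h2d : -((2 : ZMod p) * d) ≠ 0 := neg_ne_zero.2 (mul_ne_zero (htwo hp) hd)
  have h1 : ∀ u : ZMod p, χ (d ^ 2 - u ^ 2) = χ (d - u) * χ ((d - u) + -(2 * d)) * χ (-1) := by
    intro u
    rw [← _root_.map_mul, ← _root_.map_mul]
    congr 1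
    ring
  simp_rw [h1, chi_neg_one hp, mul_one]
  have hbij : Function.Bijective (fun u : ZMod p => d - u) :=
    (Equiv.subLeft d).bijective
  rw [Fintype.sum_bijective _ hbij _ (fun w => χ w * χ (w + -(2 * d))) (fun u => rfl)]
  exact chi_shift hp h2d

lemma double_to_quartic (hp : p % 24 = 5) {d : ZMod p} (hd : d ≠ 0) :
    ∑ c : ZMod p, ∑ e : ZMod p, (if e ^ 2 = c ^ 2 + d then χ c * χ e else 0)
    = ∑ t ∈ Finset.univ.erase (0 : ZMod p), χ (d ^ 2 - t ^ 4) := by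
  have h2 : (2 : ZMod p) ≠ 0 := htwo hp
  have hprod : ∑ c : ZMod p, ∑ e : ZMod p, (if e ^ 2 = c ^ 2 + d then χ c * χ e else 0)
      = ∑ q ∈ (Finset.univ ×ˢ Finset.univ).filter
          (fun q : ZMod p × ZMod p => q.2 ^ 2 = q.1 ^ 2 + d), χ q.1 * χ q.2 := by
    rw [Finset.sum_filter, ← Finset.sum_product']
  rw [hprod]
  refine Finset.sum_nbij' (fun q => q.2 - q.1)
    (fun t => ((d / t - t) / 2, (d / t + t) / 2)) ?_ ?_ ?_ ?_ ?_
  · rintro ⟨c, e⟩ hq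
    simp only [Finset.mem_filter, Finset.mem_product, Finset.mem_univ, true_and] at hq
    simp only [Finset.mem_erase, Finset.mem_univ, and_true]
    intro h
    have : e = c := by linear_combination h
    subst this
    exact hd (by linear_combination -hq)
  · intro t ht
    have ht0 : t ≠ 0 := Finset.ne_of_mem_erase ht
    simp only [Finset.mem_filter, Finset.mem_product, Finset.mem_univ, true_and]
    field_simp
    ring
  · rintro ⟨c, e⟩ hq
    simp only [Finset.mem_filter, Finset.mem_product, Finset.mem_univ, true_and] at hq
    have hec : e - c ≠ 0 := by
      intro h
      have : e = c := by linear_combination h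
      subst this
      exact hd (by linear_combination -hq)
    have hdiv : d / (e - c) = e + c := by
      rw [div_eq_iff hec]
      linear_combination -hq
    simp only [Prod.mk.injEq]
    constructor
    · rw [hdiv]; field_simp
      ring1
    · rw [hdiv]; field_simp
      ring1
  · intro t ht
    have ht0 : t ≠ 0 := Finset.ne_of_mem_erase ht
    field_simp
    ring
  · rintro ⟨c, e⟩ hq
    simp only [Finset.mem_filter, Finset.mem_product, Finset.mem_univ, true_and] at hq
    have hec : e - c ≠ 0 := by
      intro h
      have : e = c := by linear_combination h
      subst this
      exact hd (by linear_combination -hq)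
    have h2ec : (2 : ZMod p) * (e - c) ≠ 0 := mul_ne_zero h2 hec
    have hkey : d ^ 2 - (e - c) ^ 4 = (c * e) * ((2 : ZMod p) * (e - c)) ^ 2 := by
      have hd' : d = e ^ 2 - c ^ 2 := by linear_combination -hq
      rw [hd']; ring
    rw [← _root_.map_mul, hkey, chi_mul_sq _ h2ec]

/-- Number of square roots, as used below. -/
lemma card_sqrts (hp : p % 24 = 5) {u : ZMod p} (hu : u ≠ 0) :
    ((Finset.univ.filter (fun t : ZMod p => t ^ 2 = u)).card : ℤ) = χ u + 1 := by
  have := quadraticChar_card_sqrts (ringChar_ne_two hp) u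
  rw [← this]
  congr 1
  rw [Set.toFinset_setOf]

lemma card_sqrts_zero :
    ((Finset.univ.filter (fun t : ZMod p => t ^ 2 = (0 : ZMod p))).card : ℤ) = 1 := by
  have : Finset.univ.filter (fun t : ZMod p => t ^ 2 = (0 : ZMod p)) = {0} := by
    ext x
    simp [pow_eq_zero_iff]
  rw [this]
  simp

lemma sum_sq_fiber (F : ZMod p → ℤ) :
    ∑ t : ZMod p, F (t ^ 2)
    = ∑ u : ZMod p, ((Finset.univ.filter (fun t : ZMod p => t ^ 2 = u)).card : ℤ) * F u := by
  rw [← Finset.sum_fiberwise_of_maps_to (g := fun t : ZMod p => t ^ 2)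
    (fun x _ => Finset.mem_univ _) (fun t => F (t ^ 2))]
  refine Finset.sum_congr rfl fun u _ => ?_
  have hcg : ∀ t ∈ Finset.univ.filter (fun t : ZMod p => t ^ 2 = u), F (t ^ 2) = F u :=
    fun t ht => by rw [(Finset.mem_filter.1 ht).2]
  rw [Finset.sum_congr rfl hcg, Finset.sum_const, nsmul_eq_mul]

lemma quartic_pair (hp : p % 24 = 5) {d : ZMod p} (hd : d ≠ 0) :
    (∑ t : ZMod p, χ (d ^ 2 - t ^ 4)) + (∑ t : ZMod p, χ ((2 * d) ^ 2 - t ^ 4))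
    = 2 * ∑ u : ZMod p, χ (d ^ 2 - u ^ 2) := by
  have h2 : (2 : ZMod p) ≠ 0 := htwo hp
  have hA : ∑ t : ZMod p, χ (d ^ 2 - t ^ 4)
      = ∑ u : ZMod p, ((Finset.univ.filter (fun t : ZMod p => t ^ 2 = u)).card : ℤ)
          * χ (d ^ 2 - u ^ 2) := by
    rw [← sum_sq_fiber (fun u => χ (d ^ 2 - u ^ 2))]
    exact Finset.sum_congr rfl fun t _ => by ring_nf
  have hB : ∑ t : ZMod p, χ ((2 * d) ^ 2 - t ^ 4)
      = ∑ u : ZMod p, ((Finset.univ.filter (fun t : ZMod p => t ^ 2 = 2 * u)).card : ℤ)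
          * χ (d ^ 2 - u ^ 2) := by
    rw [show ∑ t : ZMod p, χ ((2 * d) ^ 2 - t ^ 4)
        = ∑ u : ZMod p, ((Finset.univ.filter (fun t : ZMod p => t ^ 2 = u)).card : ℤ)
            * χ ((2 * d) ^ 2 - u ^ 2) from by
      rw [← sum_sq_fiber (fun u => χ ((2 * d) ^ 2 - u ^ 2))]
      exact Finset.sum_congr rfl fun t _ => by ring_nf]
    have hbij : Function.Bijective (fun u : ZMod p => 2 * u) := mulLeft_bijective₀ 2 h2
    refine (Fintype.sum_bijective _ hbij
      (fun u => ((Finset.univ.filter (fun t : ZMod p => t ^ 2 = 2 * u)).card : ℤ)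
          * χ (d ^ 2 - u ^ 2))
      (fun v => ((Finset.univ.filter (fun t : ZMod p => t ^ 2 = v)).card : ℤ)
          * χ ((2 * d) ^ 2 - v ^ 2)) ?_).symm
    intro u
    show _ = ((Finset.univ.filter (fun t : ZMod p => t ^ 2 = 2 * u)).card : ℤ)
        * χ ((2 * d) ^ 2 - (2 * u) ^ 2)
    congr 1
    have : (2 * d) ^ 2 - (2 * u) ^ 2 = (d ^ 2 - u ^ 2) * 2 ^ 2 := by ring
    rw [this, chi_mul_sq _ h2]
  rw [hA, hB, ← Finset.sum_add_distrib, Finset.mul_sum]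
  refine Finset.sum_congr rfl fun u _ => ?_
  rw [← add_mul]
  congr 1
  by_cases hu : u = 0
  · subst hu
    rw [mul_zero, card_sqrts_zero]
    norm_num
  · rw [card_sqrts hp hu, card_sqrts hp (mul_ne_zero h2 hu), _root_.map_mul, chi_two hp]
    ring

lemma step_A (hp : p % 24 = 5) (d : ZMod p) :
    4 * ∑ u : ZMod p, psi p u * psi p (u + d)
    = ∑ c : ZMod p, ∑ e : ZMod p, (if e ^ 2 = c ^ 2 + d then χ c * χ e else 0) := by
  have h1 : 4 * ∑ u : ZMod p, psi p u * psi p (u + d)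
      = ∑ u : ZMod p, (2 * psi p u) * (2 * psi p (u + d)) := by
    rw [Finset.mul_sum]; exact Finset.sum_congr rfl fun u _ => by ring
  rw [h1]
  simp_rw [← two_psi hp]
  have h2 : ∀ u : ZMod p,
      (∑ c : ZMod p, (if c ^ 2 = u then χ c else 0))
        * (∑ e : ZMod p, (if e ^ 2 = u + d then χ e else 0))
      = ∑ c : ZMod p, ∑ e : ZMod p,
          (if c ^ 2 = u then χ c else 0) * (if e ^ 2 = u + d then χ e else 0) := by
    intro u
    rw [Finset.sum_mul_sum]
  simp_rw [h2]
  rw [Finset.sum_comm]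
  refine Finset.sum_congr rfl fun c _ => ?_
  rw [Finset.sum_comm]
  refine Finset.sum_congr rfl fun e _ => ?_
  have h3 : ∀ u : ZMod p,
      (if c ^ 2 = u then χ c else 0) * (if e ^ 2 = u + d then χ e else 0)
      = if c ^ 2 = u then (χ c * (if e ^ 2 = u + d then χ e else 0)) else 0 := by
    intro u
    split <;> simp
  simp_rw [h3]
  rw [Finset.sum_ite_eq Finset.univ (c ^ 2)
    (fun u => χ c * (if e ^ 2 = u + d then χ e else 0)), if_pos (Finset.mem_univ _)]
  split <;> simp

lemma key_sum (hp : p % 24 = 5) {d : ZMod p} (hd : d ≠ 0) :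
    (∑ u : ZMod p, psi p u * psi p (u + d))
    + (∑ u : ZMod p, psi p (2 * u) * psi p (2 * u + 2 * d)) = -1 := by
  have h2 : (2 : ZMod p) ≠ 0 := htwo hp
  have h2d : (2 : ZMod p) * d ≠ 0 := mul_ne_zero h2 hd
  have hS2 : ∑ u : ZMod p, psi p (2 * u) * psi p (2 * u + 2 * d)
      = ∑ v : ZMod p, psi p v * psi p (v + 2 * d) := by
    exact Fintype.sum_bijective _ (mulLeft_bijective₀ 2 h2)
      _ (fun v => psi p v * psi p (v + 2 * d)) (fun u => rfl)
  have quart : ∀ d' : ZMod p, d' ≠ 0 →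
      4 * ∑ u : ZMod p, psi p u * psi p (u + d')
        = (∑ t : ZMod p, χ (d' ^ 2 - t ^ 4)) - 1 := by
    intro d' hd'
    rw [step_A hp, double_to_quartic hp hd',
      Finset.sum_erase_eq_sub (Finset.mem_univ (0 : ZMod p))]
    have : χ (d' ^ 2 - (0 : ZMod p) ^ 4) = 1 := by
      rw [show d' ^ 2 - (0 : ZMod p) ^ 4 = d' ^ 2 from by ring, _root_.map_pow, quadraticChar_sq_one hd']
    rw [this]
  have hq1 := quart d hd
  have hq2 := quart (2 * d) h2d
  have hqp := quartic_pair hp hd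
  have hE := sum_chi_dsq hp hd
  rw [hS2]
  have h4 : (4 : ℤ) * ((∑ u : ZMod p, psi p u * psi p (u + d))
      + ∑ v : ZMod p, psi p v * psi p (v + 2 * d)) = -4 := by
    rw [mul_add, hq1, hq2]
    linarith
  linarith

lemma RX_apply (a b : ZMod p) : RX p a b = psi p (b - a) := rfl
lemma RY_apply (a b : ZMod p) : RY p a b = psi p (2 * (b - a)) := rfl

lemma sum_psi_affine (hp : p % 24 = 5) {c : ZMod p} (hc : c ≠ 0) (b : ZMod p) :
    ∑ t : ZMod p, psi p (c * t + b) = 0 := by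
  have hbij : Function.Bijective (fun t : ZMod p => c * t + b) := by
    have : (fun t : ZMod p => c * t + b) = (fun x : ZMod p => x + b) ∘ (fun t => c * t) := rfl
    rw [this]
    exact (Equiv.addRight b).bijective.comp (mulLeft_bijective₀ c hc)
  rw [Fintype.sum_bijective _ hbij _ (psi p) (fun t => rfl)]
  exact sum_psi hp

lemma sum_psi_sub (hp : p % 24 = 5) (b : ZMod p) :
    ∑ t : ZMod p, psi p (b - t) = 0 := by
  refine (Finset.sum_congr rfl fun t _ => ?_).trans
    (sum_psi_affine hp (neg_ne_zero.2 one_ne_zero) b)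
  congr 1; ring

lemma sum_psi_sub' (hp : p % 24 = 5) (b : ZMod p) :
    ∑ t : ZMod p, psi p (t - b) = 0 := by
  refine (Finset.sum_congr rfl fun t _ => ?_).trans
    (sum_psi_affine hp one_ne_zero (-b))
  congr 1; ring

lemma sum_psi_sub2 (hp : p % 24 = 5) (b : ZMod p) :
    ∑ t : ZMod p, psi p (2 * (b - t)) = 0 := by
  refine (Finset.sum_congr rfl fun t _ => ?_).trans
    (sum_psi_affine hp (neg_ne_zero.2 (htwo hp)) (2 * b))
  congr 1; ring

lemma sum_psi_sub2' (hp : p % 24 = 5) (b : ZMod p) :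
    ∑ t : ZMod p, psi p (2 * (t - b)) = 0 := by
  refine (Finset.sum_congr rfl fun t _ => ?_).trans
    (sum_psi_affine hp (htwo hp) (-(2 * b)))
  congr 1; ring

lemma Xmat_transpose (hp : p % 24 = 5) : (Xmat p)ᵀ = -(Xmat p) := by
  ext i j
  match i, j with
  | none, none => simp [Xmat]
  | none, some b => simp [Xmat, Matrix.transpose_apply]
  | some a, none => simp [Xmat, Matrix.transpose_apply]
  | some a, some b =>
    show RX p b a = - RX p a b
    rw [RX_apply, RX_apply, show a - b = -(b - a) from by ring, psi_odd hp]

lemma Ymat_transpose (hp : p % 24 = 5) : (Ymat p)ᵀ = -(Ymat p) := by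
  ext i j
  match i, j with
  | none, none => simp [Ymat]
  | none, some b => simp [Ymat, Matrix.transpose_apply]
  | some a, none => simp [Ymat, Matrix.transpose_apply]
  | some a, some b =>
    show RY p b a = - RY p a b
    rw [RY_apply, RY_apply, show 2 * (a - b) = -(2 * (b - a)) from by ring, psi_odd hp]

/-- The convolution sums appearing in `X² + Y²`. -/
lemma conv_X (hp : p % 24 = 5) (a b : ZMod p) :
    ∑ t : ZMod p, psi p (t - a) * psi p (b - t)
    = - ∑ u : ZMod p, psi p u * psi p (u + (a - b)) := by
  have hbij : Function.Bijective (fun u : ZMod p => u + a) := (Equiv.addRight a).bijective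
  rw [← Fintype.sum_bijective _ hbij
    (fun u => psi p u * psi p (b - (u + a))) (fun t => psi p (t - a) * psi p (b - t))
    (fun u => by simp only [add_sub_cancel_right])]
  rw [← Finset.sum_neg_distrib]
  refine Finset.sum_congr rfl fun u _ => ?_
  rw [show b - (u + a) = -(u + (a - b)) from by ring, psi_odd hp]
  ring

lemma conv_Y (hp : p % 24 = 5) (a b : ZMod p) :
    ∑ t : ZMod p, psi p (2 * (t - a)) * psi p (2 * (b - t))
    = - ∑ u : ZMod p, psi p (2 * u) * psi p (2 * u + 2 * (a - b)) := by
  have hbij : Function.Bijective (fun u : ZMod p => u + a) := (Equiv.addRight a).bijective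
  rw [← Fintype.sum_bijective _ hbij
    (fun u => psi p (2 * u) * psi p (2 * (b - (u + a))))
    (fun t => psi p (2 * (t - a)) * psi p (2 * (b - t)))
    (fun u => by simp only [add_sub_cancel_right])]
  rw [← Finset.sum_neg_distrib]
  refine Finset.sum_congr rfl fun u _ => ?_
  rw [show 2 * (b - (u + a)) = -(2 * u + 2 * (a - b)) from by ring, psi_odd hp]
  ring

lemma P1 (hp : p % 24 = 5) :
    Xmat p * Xmat p + Ymat p * Ymat p
      = (-(p:ℤ)) • (1 : Matrix (Option (ZMod p)) (Option (ZMod p)) ℤ) := by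
  ext i j
  rw [Matrix.add_apply, Matrix.mul_apply, Matrix.mul_apply, Fintype.sum_option,
    Fintype.sum_option, Matrix.smul_apply, Matrix.one_apply]
  match i, j with
  | none, none =>
    show (0 : ℤ) * 0 + (∑ t : ZMod p, 1 * (-1)) + ((0:ℤ) * 0 + ∑ t : ZMod p, (0:ℤ) * 0)
      = (-(p:ℤ)) • (if (none : Option (ZMod p)) = none then 1 else 0)
    simp [ZMod.card p]
  | none, some b =>
    show (0 : ℤ) * 1 + (∑ t : ZMod p, 1 * RX p t b) + ((0:ℤ) * 0 + ∑ t : ZMod p, (0:ℤ) * RY p t b)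
      = (-(p:ℤ)) • (if (none : Option (ZMod p)) = some b then 1 else 0)
    simp only [RX_apply, one_mul, zero_mul, mul_zero]
    rw [sum_psi_sub hp b]
    simp
  | some a, none =>
    show (-1 : ℤ) * 0 + (∑ t : ZMod p, RX p a t * (-1))
        + ((0:ℤ) * 0 + ∑ t : ZMod p, RY p a t * 0)
      = (-(p:ℤ)) • (if (some a : Option (ZMod p)) = none then 1 else 0)
    simp only [RX_apply, mul_zero, mul_neg_one]
    rw [Finset.sum_neg_distrib, sum_psi_sub' hp a]
    simp
  | some a, some b =>
    show (-1 : ℤ) * 1 + (∑ t : ZMod p, RX p a t * RX p t b)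
        + ((0:ℤ) * 0 + ∑ t : ZMod p, RY p a t * RY p t b)
      = (-(p:ℤ)) • (if (some a : Option (ZMod p)) = some b then 1 else 0)
    simp only [RX_apply, RY_apply]
    rw [conv_X hp a b, conv_Y hp a b]
    by_cases hab : a = b
    · subst hab
      have h1 : ∑ u : ZMod p, psi p u * psi p (u + (a - a))
          = ∑ u : ZMod p, psi p u * psi p u := by
        refine Finset.sum_congr rfl fun u _ => ?_
        rw [show u + (a - a) = u from by ring]
      have h2 : ∑ u : ZMod p, psi p (2*u) * psi p (2*u + 2*(a - a))
          = ∑ u : ZMod p, psi p u * psi p u := by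
        have hbij : Function.Bijective (fun u : ZMod p => 2 * u) :=
          mulLeft_bijective₀ 2 (htwo hp)
        refine Fintype.sum_bijective _ hbij _ (fun v => psi p v * psi p v) (fun u => ?_)
        rw [show 2*u + 2*(a-a) = 2*u from by ring]
      rw [h1, h2]
      have := sum_psi_sq hp
      simp only [if_pos rfl, smul_eq_mul, mul_one]
      push_cast
      linarith
    · have hd : a - b ≠ 0 := sub_ne_zero.2 hab
      have := key_sum hp hd
      have hif : (if (some a : Option (ZMod p)) = some b then (1:ℤ) else 0) = 0 := by
        simp [hab]
      rw [hif]
      simp only [smul_eq_mul, mul_zero]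
      linarith

lemma P2 (hp : p % 24 = 5) : Xmat p * Ymat p = Ymat p * Xmat p := by
  ext i j
  rw [Matrix.mul_apply, Matrix.mul_apply, Fintype.sum_option, Fintype.sum_option]
  match i, j with
  | none, none =>
    show (0 : ℤ) * 0 + (∑ t : ZMod p, 1 * (0:ℤ)) = (0:ℤ) * 0 + ∑ t : ZMod p, (0:ℤ) * (-1)
    simp
  | none, some b =>
    show (0 : ℤ) * 0 + (∑ t : ZMod p, 1 * RY p t b)
      = (0:ℤ) * 1 + ∑ t : ZMod p, (0:ℤ) * RX p t b
    simp only [RY_apply, one_mul, zero_mul, mul_zero]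
    rw [sum_psi_sub2 hp b]
    simp
  | some a, none =>
    show (-1 : ℤ) * 0 + (∑ t : ZMod p, RX p a t * (0:ℤ))
      = (0:ℤ) * 0 + ∑ t : ZMod p, RY p a t * (-1)
    simp only [RY_apply, mul_zero, mul_neg_one, zero_mul]
    rw [Finset.sum_neg_distrib, sum_psi_sub2' hp a]
    simp
  | some a, some b =>
    show (-1 : ℤ) * 0 + (∑ t : ZMod p, RX p a t * RY p t b)
      = (0:ℤ) * 1 + ∑ t : ZMod p, RY p a t * RX p t b
    simp only [RX_apply, RY_apply, neg_one_mul, neg_zero, zero_mul, zero_add]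
    have hbij : Function.Bijective (fun t : ZMod p => a + b - t) :=
      (Equiv.subLeft (a + b)).bijective
    exact (Fintype.sum_bijective _ hbij
      (fun t => psi p (2 * (t - a)) * psi p (b - t))
      (fun t => psi p (t - a) * psi p (2 * (b - t)))
      (fun t => by
        rw [show a + b - t - a = b - t from by ring,
          show 2 * (b - (a + b - t)) = 2 * (t - a) from by ring]
        ring)).symm

lemma Bw_eq (hp : p % 24 = 5) :
    Bw p = Matrix.fromBlocks (Xmat p) (Ymat p) (Ymat p) (-(Xmat p)) := by
  rw [Bw, Ymat_transpose hp, Xmat_transpose hp, neg_neg]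

lemma Bw_transpose (hp : p % 24 = 5) : (Bw p)ᵀ = -(Bw p) := by
  rw [Bw_eq hp, Matrix.fromBlocks_transpose, Matrix.transpose_neg,
    Xmat_transpose hp, Ymat_transpose hp, ← Matrix.fromBlocks_neg]

lemma Bw_sq (hp : p % 24 = 5) :
    Bw p * Bw p = (-(p:ℤ)) • (1 : Matrix (NVIdx p) (NVIdx p) ℤ) := by
  rw [Bw_eq hp, Matrix.fromBlocks_multiply]
  simp only [Matrix.mul_neg, Matrix.neg_mul, neg_neg, P2 hp, add_neg_cancel]
  rw [add_comm (Ymat p * Ymat p) (Xmat p * Xmat p), P1 hp]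
  have h1 : ((-(p:ℤ)) • (1 : Matrix (NVIdx p) (NVIdx p) ℤ))
      = Matrix.fromBlocks ((-(p:ℤ)) • 1) 0 0 ((-(p:ℤ)) • 1) := by
    rw [← Matrix.fromBlocks_one, Matrix.fromBlocks_smul, smul_zero]
  rw [h1]

lemma NVgen_transpose (hp : p % 24 = 5) (a : ℤ) :
    (NVgen p a)ᵀ = a • (1 : Matrix (NVIdx p) (NVIdx p) ℤ) - Bw p := by
  rw [NVgen, Matrix.transpose_add, Matrix.transpose_smul, Matrix.transpose_one,
    Bw_transpose hp, ← sub_eq_add_neg]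

lemma NVgen_mul_left (hp : p % 24 = 5) {a : ℤ} (ha : a = 1 ∨ a = -1) :
    NVgen p a * (NVgen p a)ᵀ
      = ((1 + p : ℤ)) • (1 : Matrix (NVIdx p) (NVIdx p) ℤ) := by
  have haa : a * a = 1 := by rcases ha with rfl | rfl <;> norm_num
  rw [NVgen_transpose hp, NVgen, add_mul, mul_sub, mul_sub, Bw_sq hp,
    Matrix.smul_mul, Matrix.smul_mul, one_mul, Matrix.mul_smul, mul_one,
    smul_smul, haa, one_smul]
  simp only [one_mul, mul_one]
  rw [sub_add_sub_cancel, add_smul, one_smul, neg_smul, sub_neg_eq_add]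

lemma NVgen_mul_right (hp : p % 24 = 5) {a : ℤ} (ha : a = 1 ∨ a = -1) :
    (NVgen p a)ᵀ * NVgen p a
      = ((1 + p : ℤ)) • (1 : Matrix (NVIdx p) (NVIdx p) ℤ) := by
  have haa : a * a = 1 := by rcases ha with rfl | rfl <;> norm_num
  rw [NVgen_transpose hp, NVgen, sub_mul, mul_add, mul_add, Bw_sq hp,
    Matrix.smul_mul, Matrix.smul_mul, one_mul, Matrix.mul_smul, mul_one,
    smul_smul, haa, one_smul]
  simp only [one_mul, mul_one]
  rw [add_smul, one_smul, neg_smul]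
  abel

lemma NVgen_add_transpose (hp : p % 24 = 5) (a : ℤ) :
    NVgen p a + (NVgen p a)ᵀ = (2 * a) • (1 : Matrix (NVIdx p) (NVIdx p) ℤ) := by
  rw [NVgen_transpose hp, NVgen, two_mul, add_smul]
  abel

lemma rank_add_le_aux {n K : Type*} [Fintype n] [Field K]
    (A B : Matrix n n K) : (A + B).rank ≤ A.rank + B.rank := by
  classical
  rw [Matrix.rank, Matrix.rank, Matrix.rank, Matrix.mulVecLin_add]
  have hle : LinearMap.range (A.mulVecLin + B.mulVecLin)
      ≤ LinearMap.range A.mulVecLin ⊔ LinearMap.range B.mulVecLin := by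
    rintro x ⟨v, rfl⟩
    exact Submodule.mem_sup.2 ⟨A.mulVecLin v, ⟨v, rfl⟩, B.mulVecLin v, ⟨v, rfl⟩, rfl⟩
  exact le_trans (Submodule.finrank_mono hle)
    (Submodule.finrank_add_le_finrank_add_finrank _ _)

lemma cast_two_ne (u : ℤ) (hu : u = 2 * 1 ∨ u = 2 * (-1)) : ((u : ℤ) : ZMod 3) ≠ 0 := by
  rcases hu with rfl | rfl
  · decide
  · decide

lemma map_smul_one (z : ℤ) :
    ((z • (1 : Matrix (NVIdx p) (NVIdx p) ℤ)).map (Int.cast : ℤ → ZMod 3))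
      = ((z : ZMod 3)) • (1 : Matrix (NVIdx p) (NVIdx p) (ZMod 3)) := by
  ext i j
  simp only [Matrix.map_apply, Matrix.smul_apply, Matrix.one_apply, smul_eq_mul]
  split <;> simp

lemma map_mul_cast (M N : Matrix (NVIdx p) (NVIdx p) ℤ) :
    ((M * N).map (Int.cast : ℤ → ZMod 3))
      = M.map (Int.cast : ℤ → ZMod 3) * N.map (Int.cast : ℤ → ZMod 3) := by
  have := Matrix.map_mul (L := M) (M := N) (f := Int.castRingHom (ZMod 3))
  simpa using this

lemma map_add_cast (M N : Matrix (NVIdx p) (NVIdx p) ℤ) :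
    ((M + N).map (Int.cast : ℤ → ZMod 3))
      = M.map (Int.cast : ℤ → ZMod 3) + N.map (Int.cast : ℤ → ZMod 3) := by
  ext i j
  simp [Matrix.map_apply]

end NVaux

open NVaux in
/-- for a prime `p ≡ 5 (mod 24)` and `a ∈ {1, -1}`, the ternary code
`NV^(a)(p)` of length `2(p+1)` is self-dual: it coincides with its dual code
`{x : ∀ y ∈ NV^(a)(p), x ⬝ y = 0}`. -/
theorem NVcode_self_dual (p : ℕ) [Fact p.Prime] (hp : p % 24 = 5)
    (a : ℤ) (ha : a = 1 ∨ a = -1) :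
    ∀ x : NVIdx p → ZMod 3, x ∈ NVcode p a ↔ ∀ y ∈ NVcode p a, ∑ i, x i * y i = 0 := by
  haveI : Fact (Nat.Prime 3) := ⟨by norm_num⟩
  intro x
  set G : Matrix (NVIdx p) (NVIdx p) (ZMod 3) :=
    (NVgen p a).map (Int.cast : ℤ → ZMod 3) with hG
  have hGt : Gᵀ = ((NVgen p a)ᵀ).map (Int.cast : ℤ → ZMod 3) := by
    rw [hG, Matrix.transpose_map]
  have h3p : ((1 + p : ℤ) : ZMod 3) = 0 := by
    rw [ZMod.intCast_zmod_eq_zero_iff_dvd]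
    have h3 : ((3:ℕ) : ℤ) ∣ ((1 + p : ℕ) : ℤ) :=
      Int.natCast_dvd_natCast.2 (by omega)
    simpa using h3
  have hGGt : G * Gᵀ = 0 := by
    rw [hG, hGt, ← map_mul_cast, NVgen_mul_left hp ha, map_smul_one, h3p, zero_smul]
  have hGtG : Gᵀ * G = 0 := by
    rw [hG, hGt, ← map_mul_cast, NVgen_mul_right hp ha, map_smul_one, h3p, zero_smul]
  have hsum : G + Gᵀ = (((2 * a : ℤ)) : ZMod 3) • 1 := by
    rw [hG, hGt, ← map_add_cast, NVgen_add_transpose hp, map_smul_one]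
  have hc0 : (((2 * a : ℤ)) : ZMod 3) ≠ 0 := by
    rcases ha with rfl | rfl
    · exact cast_two_ne _ (Or.inl rfl)
    · exact cast_two_ne _ (Or.inr rfl)
  have hunit : IsUnit ((((2 * a : ℤ)) : ZMod 3) • (1 : Matrix (NVIdx p) (NVIdx p) (ZMod 3))) := by
    rw [Matrix.isUnit_iff_isUnit_det, Matrix.det_smul, Matrix.det_one, mul_one]
    exact (Ne.isUnit hc0).pow _
  have hrank2 : G.rank + G.rank = Fintype.card (NVIdx p) := by
    have h1 : G.rank + Gᵀ.rank ≤ Fintype.card (NVIdx p) :=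
      Matrix.rank_add_rank_le_card_of_mul_eq_zero hGGt
    have h2 : Fintype.card (NVIdx p) ≤ G.rank + Gᵀ.rank := by
      calc Fintype.card (NVIdx p)
          = ((((2 * a : ℤ)) : ZMod 3) • (1 : Matrix (NVIdx p) (NVIdx p) (ZMod 3))).rank :=
            (Matrix.rank_of_isUnit _ hunit).symm
        _ = (G + Gᵀ).rank := by rw [hsum]
        _ ≤ G.rank + Gᵀ.rank := rank_add_le_aux G Gᵀ
    rw [Matrix.rank_transpose] at h1 h2
    omega
  have hrange : LinearMap.range (Gᵀ).mulVecLin = LinearMap.ker G.mulVecLin := by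
    have hle : LinearMap.range (Gᵀ).mulVecLin ≤ LinearMap.ker G.mulVecLin := by
      rintro _ ⟨v, rfl⟩
      rw [LinearMap.mem_ker, Matrix.mulVecLin_apply, Matrix.mulVecLin_apply,
        Matrix.mulVec_mulVec, hGGt, Matrix.zero_mulVec]
    refine Submodule.eq_of_le_of_finrank_eq hle ?_
    have hrn := LinearMap.finrank_range_add_finrank_ker (G.mulVecLin)
    rw [Module.finrank_fintype_fun_eq_card] at hrn
    have hr1 : Module.finrank (ZMod 3) (LinearMap.range (Gᵀ).mulVecLin) = Gᵀ.rank := rfl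
    have hr2 : Module.finrank (ZMod 3) (LinearMap.range G.mulVecLin) = G.rank := rfl
    rw [hr1, Matrix.rank_transpose]
    omega
  have hcode : NVcode p a = LinearMap.range (Gᵀ).mulVecLin := by
    rw [Matrix.range_mulVecLin]
    rfl
  constructor
  · intro hx y hy
    have hxker : x ∈ LinearMap.ker G.mulVecLin := by
      rw [← hrange, ← hcode]; exact hx
    have hx' : G.mulVec x = 0 := by
      simpa [Matrix.mulVecLin_apply] using LinearMap.mem_ker.1 hxker
    have hgen : ∀ j, ∑ i, x i * G j i = 0 := by
      intro j
      have := congr_fun hx' j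
      simp only [Matrix.mulVec, dotProduct, Pi.zero_apply] at this
      rw [← this]
      exact Finset.sum_congr rfl fun i _ => mul_comm _ _
    refine Submodule.span_induction (p := fun y _ => ∑ i, x i * y i = 0)
      ?_ ?_ ?_ ?_ hy
    · rintro y ⟨j, rfl⟩
      exact hgen j
    · simp
    · intro y z _ _ hy hz
      simp only [Pi.add_apply, mul_add, Finset.sum_add_distrib, hy, hz, add_zero]
    · intro c y _ hy
      simp only [Pi.smul_apply, smul_eq_mul]
      calc ∑ i, x i * (c * y i) = c * ∑ i, x i * y i := by
            rw [Finset.mul_sum]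
            exact Finset.sum_congr rfl fun i _ => by ring
        _ = 0 := by rw [hy, mul_zero]
  · intro hdual
    have hx' : G.mulVec x = 0 := by
      funext j
      have hj := hdual (G j) (Submodule.subset_span ⟨j, rfl⟩)
      simp only [Matrix.mulVec, dotProduct, Pi.zero_apply]
      rw [← hj]
      exact Finset.sum_congr rfl fun i _ => mul_comm _ _
    rw [hcode, hrange]
    exact LinearMap.mem_ker.2 (by simpa [Matrix.mulVecLin_apply] using hx')
end

section
/- The ternary self-dual codes NV^(1)(29) and NV^(−1)(29) of length 60 are equivalent: there exists a 60×60 monomial matrix P over 𝔽₃ such that NV^(−1)(29) = {xP : x ∈ NV^(1)(29)}. -/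
open Matrix

instance : Fact (Nat.Prime 29) := ⟨by norm_num⟩

/-- `P` is a monomial matrix over `𝔽₃`: exactly one nonzero entry in each row and column. -/
def IsMonomial3 {κ : Type*} [DecidableEq κ] (P : Matrix κ κ (ZMod 3)) : Prop :=
  ∃ σ : Equiv.Perm κ, ∃ s : κ → ZMod 3, (∀ i, s i ≠ 0) ∧
    ∀ i j, P i j = if j = σ i then s i else 0

lemma RXskew : ∀ a b : ZMod 29, RX 29 b a = - RX 29 a b := by decide

lemma RYskew : ∀ a b : ZMod 29, RY 29 b a = - RY 29 a b := by decide

lemma Xskew : (Xmat 29)ᵀ = -(Xmat 29) := by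
  ext i j
  rw [Matrix.transpose_apply, Matrix.neg_apply]
  match i, j with
  | none, none => show (0 : ℤ) = -0; norm_num
  | none, some b => show (-1 : ℤ) = -1; rfl
  | some a, none => show (1 : ℤ) = -(-1); norm_num
  | some a, some b => exact RXskew a b

lemma Yskew : (Ymat 29)ᵀ = -(Ymat 29) := by
  ext i j
  rw [Matrix.transpose_apply, Matrix.neg_apply]
  match i, j with
  | none, none => show (0 : ℤ) = -0; norm_num
  | none, some b => show (0 : ℤ) = -0; norm_num
  | some a, none => show (0 : ℤ) = -0; norm_num
  | some a, some b => exact RYskew a b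

/-- The symplectic-type monomial matrix over `ℤ`. -/
def Jm : Matrix (NVIdx 29) (NVIdx 29) ℤ := Matrix.fromBlocks 0 1 (-1) 0

lemma BwJ : Bw 29 * Jm = -(Jm * Bw 29) := by
  unfold Bw Jm
  rw [Xskew, Yskew, Matrix.fromBlocks_multiply, Matrix.fromBlocks_multiply]
  simp [Matrix.fromBlocks_neg]

lemma JJ : Jm * Jm = -1 := by
  unfold Jm
  rw [Matrix.fromBlocks_multiply]
  simp [← Matrix.fromBlocks_one, Matrix.fromBlocks_neg]

lemma genJ : NVgen 29 1 * Jm = (-Jm) * NVgen 29 (-1) := by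
  unfold NVgen
  rw [add_mul, mul_add, BwJ]
  simp

/-- The monomial matrix over `ZMod 3`. -/
def Pm : Matrix (NVIdx 29) (NVIdx 29) (ZMod 3) := Jm.map (Int.cast : ℤ → ZMod 3)

lemma Pm_monomial : IsMonomial3 Pm := by
  refine ⟨Equiv.sumComm _ _, Sum.elim (fun _ => 1) (fun _ => -1), ?_, ?_⟩
  · rintro (i | i) <;> simp <;> decide
  · rintro (i | i) (j | j) <;>
      simp [Pm, Jm, Matrix.fromBlocks, Matrix.one_apply, eq_comm,
        apply_ite (Int.cast : ℤ → ZMod 3)] <;>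
      split_ifs <;> simp

noncomputable def castHom : Matrix (NVIdx 29) (NVIdx 29) ℤ →+* Matrix (NVIdx 29) (NVIdx 29) (ZMod 3) :=
  (Int.castRingHom (ZMod 3)).mapMatrix

lemma castHom_apply (M : Matrix (NVIdx 29) (NVIdx 29) ℤ) :
    castHom M = M.map (Int.cast : ℤ → ZMod 3) := rfl

lemma genJ3 :
    (NVgen 29 1).map (Int.cast : ℤ → ZMod 3) * Pm =
      (-Pm) * (NVgen 29 (-1)).map (Int.cast : ℤ → ZMod 3) := by
  have h := congrArg castHom genJ
  rw [_root_.map_mul, _root_.map_mul, map_neg] at h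
  simp only [castHom_apply] at h
  exact h

lemma PmPm : Pm * Pm = -1 := by
  have h := congrArg castHom JJ
  rw [_root_.map_mul, map_neg, _root_.map_one] at h
  simp only [castHom_apply] at h
  exact h

lemma back_abstract {κ : Type*} [Fintype κ] [DecidableEq κ]
    {P A B : Matrix κ κ (ZMod 3)} (h : A * P = -P * B)
    (hP : P * P = -1) : B = P * (A * P) := by
  rw [h, ← mul_assoc, mul_neg, hP, neg_neg, one_mul]

lemma backJ3 :
    (NVgen 29 (-1)).map (Int.cast : ℤ → ZMod 3) =
      Pm * ((NVgen 29 1).map (Int.cast : ℤ → ZMod 3) * Pm) :=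
  back_abstract genJ3 PmPm

lemma vecMulLinear_comp {κ : Type*} [Fintype κ] [DecidableEq κ]
    (A B : Matrix κ κ (ZMod 3)) :
    B.vecMulLinear ∘ₗ A.vecMulLinear = (A * B).vecMulLinear :=
  LinearMap.ext fun x => by simp [Matrix.vecMul_vecMul]

/-- the ternary self-dual codes `NV^(1)(29)` and `NV^(-1)(29)` of length `60`
are equivalent: there is a `60 × 60` monomial matrix `P` over `𝔽₃` with
`NV^(-1)(29) = {x P : x ∈ NV^(1)(29)}`. -/
theorem NV29_pos_equiv_neg :
    ∃ P : Matrix (NVIdx 29) (NVIdx 29) (ZMod 3), IsMonomial3 P ∧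
      (NVcode 29 (-1) : Set (NVIdx 29 → ZMod 3)) =
        (fun x => Matrix.vecMul x P) '' (NVcode 29 1 : Set (NVIdx 29 → ZMod 3)) := by
  classical
  refine ⟨Pm, Pm_monomial, ?_⟩
  have hC1 : NVcode 29 1 =
      LinearMap.range ((NVgen 29 1).map (Int.cast : ℤ → ZMod 3)).vecMulLinear := by
    rw [_root_.range_vecMulLinear]; rfl
  have hC2 : NVcode 29 (-1) =
      LinearMap.range ((NVgen 29 (-1)).map (Int.cast : ℤ → ZMod 3)).vecMulLinear := by
    rw [_root_.range_vecMulLinear]; rfl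
  have himg : (fun x => Matrix.vecMul x Pm) '' (NVcode 29 1 : Set (NVIdx 29 → ZMod 3)) =
      (Submodule.map Pm.vecMulLinear (NVcode 29 1) : Set (NVIdx 29 → ZMod 3)) := by
    rw [Submodule.map_coe, Matrix.coe_vecMulLinear]
  rw [himg]
  congr 1
  rw [hC1, hC2, ← LinearMap.range_comp, vecMulLinear_comp]
  apply le_antisymm
  · rw [backJ3, ← vecMulLinear_comp]
    exact LinearMap.range_comp_le_range _ _
  · rw [genJ3, ← vecMulLinear_comp]
    exact LinearMap.range_comp_le_range _ _
end
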